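/- arXiv:1312.2986 — 4 statements merged into one kernel-verified Lean document; each statement's English description precedes it below -/
import Mathlib

section
/- If the global discrepancy D(M,μ) := max over i,j of E(i,j) satisfies D(M,μ) ≤ δ, where μ is a positive eigenvector of the positive matrix M (with unit diagonal) for λ_max, then the Saaty inconsistency index S(M) = (λ_max − n)/(n−1) satisfies S(M) ≤ δ. -/
theorem discrepancy_bounds_saaty {n : ℕ} (hn : 2 ≤ n)
    (M : Matrix (Fin n) (Fin n) ℝ)
    (hpos : ∀ i j, 0 < M i j) (hdiag : ∀ j, M j j = 1)
    (μ : Fin n → ℝ) (hμ : ∀ i, 0 < μ i) (lam : ℝ)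
    (heig : ∀ j, ∑ i, M j i * μ i = lam * μ j)
    (δ : ℝ)
    (hD : ∀ i j, max (M j i * μ i / μ j - 1) (1 / (M j i * μ i / μ j) - 1) ≤ δ) :
    (lam - n) / (n - 1) ≤ δ := by
  have hn2 : (2:ℝ) ≤ n := by exact_mod_cast hn
  have hn1 : (0:ℝ) < (n:ℝ) - 1 := by linarith
  set j : Fin n := ⟨0, by omega⟩ with hj
  have hμj := hμ j
  have hδ0 : 0 ≤ δ := by
    have h := hD j j
    rw [hdiag, one_mul, div_self hμj.ne'] at h
    simpa using h
  have hterm : ∀ i, M j i * μ i ≤ (1 + δ) * μ j := by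
    intro i
    have h1 := le_trans (le_max_left _ _) (hD i j)
    have h2 : M j i * μ i / μ j ≤ 1 + δ := by linarith
    calc M j i * μ i = (M j i * μ i / μ j) * μ j := by field_simp
      _ ≤ (1 + δ) * μ j := by nlinarith
  have hsum : lam * μ j ≤ (n + ((n:ℝ) - 1) * δ) * μ j := by
    rw [← heig j]
    have hsplit : ∑ i, M j i * μ i
        = M j j * μ j + ∑ i ∈ Finset.univ.erase j, M j i * μ i := by
      exact (Finset.add_sum_erase _ (fun i => M j i * μ i) (Finset.mem_univ j)).symm
    rw [hsplit, hdiag, one_mul]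
    have hb : ∑ i ∈ Finset.univ.erase j, M j i * μ i
        ≤ ∑ _i ∈ Finset.univ.erase j, (1 + δ) * μ j :=
      Finset.sum_le_sum fun i _ => hterm i
    have hcard : (Finset.univ.erase j).card = n - 1 := by
      simp [Finset.card_erase_of_mem]
    rw [Finset.sum_const, hcard] at hb
    have hcast : ((n - 1 : ℕ) : ℝ) = (n:ℝ) - 1 := by
      have : 1 ≤ n := by omega
      push_cast [this]; ring
    have : ((n-1:ℕ)) • ((1 + δ) * μ j) = ((n:ℝ) - 1) * ((1 + δ) * μ j) := by
      rw [nsmul_eq_mul, hcast]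
    rw [this] at hb
    nlinarith
  have hlam : lam ≤ (n:ℝ) + ((n:ℝ) - 1) * δ := by
    by_contra h
    push_neg at h
    nlinarith
  rw [div_le_iff₀ hn1]
  linarith
end

section
/- (Preservation of Order Preference) Let M be a reciprocal positive matrix and μ a positive ranking with global discrepancy D(M,μ) < δ. If m_ij ≥ δ + 1 (in particular m_ij > 1), then μ(i) > μ(j). -/
theorem POP {n : ℕ} (M : Matrix (Fin n) (Fin n) ℝ)
    (hpos : ∀ i j, 0 < M i j)
    (hrec : ∀ i j, M i j = 1 / M j i)
    (μ : Fin n → ℝ) (hμ : ∀ i, 0 < μ i)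
    (δ : ℝ) (hδ : 0 < δ)
    (hD : ∀ p q, max (M q p * μ p / μ q - 1) (1 / (M q p * μ p / μ q) - 1) < δ)
    (i j : Fin n) (hij : δ + 1 ≤ M i j) :
    μ j < μ i := by
  have hMji : 0 < M j i := hpos j i
  have hμi := hμ i
  have hμj := hμ j
  have h2 := lt_of_le_of_lt (le_max_right _ _) (hD i j)
  have heq : 1 / (M j i * μ i / μ j) = M i j * μ j / μ i := by
    rw [hrec i j]; field_simp
  rw [heq] at h2
  have h3 : M i j * μ j / μ i < δ + 1 := by linarith
  rw [div_lt_iff₀ hμi] at h3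
  nlinarith
end

section
/- (Preservation of Order of Intensity of Preference) Let M be a reciprocal positive matrix and μ a positive ranking with global discrepancy D(M,μ) < δ. If m_ij > m_kl > 1 and m_ij/m_kl ≥ (δ+1)², then μ(i)/μ(j) > μ(k)/μ(l). -/
theorem POIP {n : ℕ} (M : Matrix (Fin n) (Fin n) ℝ)
    (hpos : ∀ i j, 0 < M i j)
    (hrec : ∀ i j, M i j = 1 / M j i)
    (μ : Fin n → ℝ) (hμ : ∀ i, 0 < μ i)
    (δ : ℝ) (hδ : 0 < δ)
    (hD : ∀ p q, max (M q p * μ p / μ q - 1) (1 / (M q p * μ p / μ q) - 1) < δ)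
    (i j k l : Fin n) (h1 : 1 < M k l) (h2 : M k l < M i j)
    (hratio : (δ + 1) ^ 2 ≤ M i j / M k l) :
    μ k / μ l < μ i / μ j := by
  have hA := hpos i j
  have hB := hpos k l
  have hi := hμ i
  have hj := hμ j
  have hk := hμ k
  have hl := hμ l
  have hδ1 : (0:ℝ) < δ + 1 := by linarith
  have d1 := lt_of_le_of_lt (le_max_right _ _) (hD i j)
  have d2 := lt_of_le_of_lt (le_max_left _ _) (hD k l)
  rw [hrec j i] at d1
  rw [hrec l k] at d2
  -- d1 : 1 / (1 / M i j * μ i / μ j) - 1 < δ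
  -- d2 : 1 / M k l * μ k / μ l - 1 < δ
  have d1' : M i j * μ j < (δ + 1) * μ i := by
    have h : 1 / (1 / M i j * μ i / μ j) = M i j * μ j / μ i := by
      field_simp
    rw [h] at d1
    have := (div_lt_iff₀ hi).mp (by linarith : M i j * μ j / μ i < δ + 1)
    linarith
  have d2' : μ k < (δ + 1) * (M k l * μ l) := by
    have h : 1 / M k l * μ k / μ l = μ k / (M k l * μ l) := by
      field_simp
    rw [h] at d2
    have := (div_lt_iff₀ (by positivity)).mp (by linarith : μ k / (M k l * μ l) < δ + 1)
    linarith
  have hr : (δ + 1) ^ 2 * M k l ≤ M i j := by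
    nlinarith [(le_div_iff₀ hB).mp hratio]
  rw [div_lt_div_iff₀ hl hj]
  nlinarith [mul_pos hl hj, mul_pos hB (mul_pos hl hj), mul_pos hδ1 hj,
    mul_lt_mul_of_pos_right d2' hj, mul_lt_mul_of_pos_right d1' hl,
    mul_pos hi hl, sq_nonneg (δ+1)]
end

section
/- For a reciprocal positive matrix M with positive eigenvector μ for eigenvalue λ_max, the principal eigenvalue satisfies λ_max ≥ n; equivalently the Saaty index S(M) = (λ_max − n)/(n−1) is nonnegative. -/
theorem lam_ge_n {n : ℕ} (hn : 2 ≤ n)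
    (M : Matrix (Fin n) (Fin n) ℝ)
    (hpos : ∀ i j, 0 < M i j)
    (hrec : ∀ i j, M i j = 1 / M j i)
    (μ : Fin n → ℝ) (hμ : ∀ i, 0 < μ i) (lam : ℝ)
    (heig : ∀ j, ∑ i, M j i * μ i = lam * μ j) :
    (n : ℝ) ≤ lam := by
  set f : Fin n → Fin n → ℝ := fun j i => M j i * μ i / μ j with hf
  have hfpos : ∀ j i, 0 < f j i := fun j i =>
    div_pos (mul_pos (hpos j i) (hμ i)) (hμ j)
  have hprod : ∀ j i, f j i * f i j = 1 := by
    intro j i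
    have h1 : M j i * M i j = 1 := by
      rw [hrec j i]; rw [div_mul_cancel₀]
      exact (hpos i j).ne'
    have hi := (hμ i).ne'
    have hj := (hμ j).ne'
    field_simp [hf]
    have e1 : μ j * (μ j)⁻¹ = 1 := mul_inv_cancel₀ hj
    have e2 : μ i * (μ i)⁻¹ = 1 := mul_inv_cancel₀ hi
    linear_combination h1 + (M j i * M i j * μ i * (μ i)⁻¹) * e1 + (M j i * M i j) * e2
  have hpair : ∀ j i, (2 : ℝ) ≤ f j i + f i j := by
    intro j i
    have h := hprod j i
    have h1 := hfpos j i
    have h2 := hfpos i j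
    nlinarith [sq_nonneg (f j i - f i j), sq_nonneg (f j i + f i j - 2)]
  have hrow : ∀ j, ∑ i, f j i = lam := by
    intro j
    have := heig j
    show (∑ i, M j i * μ i / μ j) = lam
    rw [← Finset.sum_div, this, mul_div_assoc, div_self (hμ j).ne', mul_one]
  have hsum : ((n : ℝ)) * lam = ∑ j, ∑ i, f j i := by
    simp [hrow, Finset.sum_const, mul_comm]
  have hsum2 : ((n : ℝ)) * (n : ℝ) ≤ ∑ j, ∑ i, f j i := by
    have hswap : ∑ j, ∑ i, f j i = ∑ j, ∑ i, f i j := Finset.sum_comm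
    have h2 : (2:ℝ) * (∑ j, ∑ i, f j i) = ∑ j, ∑ i, (f j i + f i j) := by
      simp only [Finset.sum_add_distrib]
      rw [← hswap]; ring
    have h3 : ∑ j : Fin n, ∑ i : Fin n, (2:ℝ) ≤ ∑ j, ∑ i, (f j i + f i j) := by
      apply Finset.sum_le_sum; intro j _
      exact Finset.sum_le_sum fun i _ => hpair j i
    simp only [Finset.sum_const, Finset.card_univ, Fintype.card_fin, nsmul_eq_mul] at h3
    nlinarith [h3, h2]
  have hn' : (0 : ℝ) < n := by positivity
  nlinarith [hsum, hsum2]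
end
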